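/- arXiv:0711.4314 — 4 statements merged into one kernel-verified Lean document; each statement's English description precedes it below -/
import Mathlib

section
/- Let A be an associative unital ring, n ≥ 2, D ≥ 1, and let K_i^μ ∈ A (i ∈ {1,…,n}, μ ∈ {0,…,D−1}) pairwise anticommute: K_i^μ K_j^ν = −K_j^ν K_i^μ for all i, j, μ, ν. With the linear chain K^{μν}_{[i_1,…,i_n]} defined as the ordered product K_{i_1}^μ (∏_{k=1}^{n−1} ∑_ρ K_{i_k}^ρ K_{i_{k+1}}^ρ) K_{i_n}^ν, the traced chain is cyclic: ∑_μ K^{μμ}_{[1,2,…,n]} = ∑_μ K^{μμ}_{[2,…,n,1]}. -/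
/-- Tail of the linear-chain kinematic factor. -/
def ktail {A X : Type*} [Ring A] {D : ℕ} (K : X → Fin D → A) (ν : Fin D) :
    X → List X → A
  | x, [] => K x ν
  | x, y :: l => (∑ ρ : Fin D, K x ρ * K y ρ) * ktail K ν y l

/-- The linear chain `K^{μν}_{[x₁⋯xₙ]}` over a (nonempty) list of points. -/
def kchain {A X : Type*} [Ring A] {D : ℕ} (K : X → Fin D → A) (μ ν : Fin D) :
    List X → A
  | [] => 0
  | x :: l => K x μ * ktail K ν x l

section Aux

variable {A X : Type*} [Ring A] {D : ℕ}

lemma getLastD_mem (l : List X) (d : X) : l.getLastD d ∈ d :: l := by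
  induction l generalizing d with
  | nil => simp
  | cons z m ih =>
    rw [List.getLastD_cons]
    exact List.mem_cons_of_mem _ (ih z)

lemma getLastD_concat' (m : List X) (x d : X) : (m ++ [x]).getLastD d = x := by
  induction m generalizing d with
  | nil => simp
  | cons z m ih =>
    rw [List.cons_append, List.getLastD_cons]
    exact ih z

/-- The even bilinear combination `S_{yz} = ∑_ρ K_y^ρ K_z^ρ`. -/
def kS (K : X → Fin D → A) (y z : X) : A := ∑ ρ : Fin D, K y ρ * K z ρ

/-- Ordered product of the `S` factors along a chain. -/
def kprodS (K : X → Fin D → A) : X → List X → A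
  | _, [] => 1
  | x, y :: l => kS K x y * kprodS K y l

lemma kchain_cons (K : X → Fin D → A) (μ ν : Fin D) (x : X) (l : List X) :
    kchain K μ ν (x :: l) = K x μ * ktail K ν x l := rfl

lemma kS_skew (K : X → Fin D → A) (y z : X)
    (h : ∀ μ ν : Fin D, K y μ * K z ν = -(K z ν * K y μ)) :
    kS K y z = -kS K z y := by
  unfold kS
  rw [← Finset.sum_neg_distrib]
  exact Finset.sum_congr rfl fun ρ _ => h ρ ρ

lemma kS_comm_K (K : X → Fin D → A) (y z w : X) (σ : Fin D)
    (h1 : ∀ μ ν : Fin D, K y μ * K w ν = -(K w ν * K y μ))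
    (h2 : ∀ μ ν : Fin D, K z μ * K w ν = -(K w ν * K z μ)) :
    kS K y z * K w σ = K w σ * kS K y z := by
  unfold kS
  rw [Finset.sum_mul, Finset.mul_sum]
  refine Finset.sum_congr rfl fun ρ _ => ?_
  calc K y ρ * K z ρ * K w σ = K y ρ * (K z ρ * K w σ) := by rw [mul_assoc]
    _ = K y ρ * -(K w σ * K z ρ) := by rw [h2]
    _ = -(K y ρ * K w σ) * K z ρ := by
        rw [mul_neg, neg_mul, mul_assoc]
    _ = -(-(K w σ * K y ρ)) * K z ρ := by rw [h1]
    _ = K w σ * (K y ρ * K z ρ) := by rw [neg_neg, mul_assoc]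

lemma kprodS_comm_K (K : X → Fin D → A) (y : X) (l : List X) (w : X) (σ : Fin D)
    (h : ∀ a ∈ y :: l, ∀ μ ν : Fin D, K a μ * K w ν = -(K w ν * K a μ)) :
    kprodS K y l * K w σ = K w σ * kprodS K y l := by
  induction l generalizing y with
  | nil => simp [kprodS]
  | cons z l ih =>
    have hy := h y (by simp)
    have hz := h z (by simp)
    calc kprodS K y (z :: l) * K w σ = kS K y z * (kprodS K z l * K w σ) := by
          rw [kprodS, mul_assoc]
      _ = kS K y z * (K w σ * kprodS K z l) := by
          rw [ih z (fun a ha => h a (by simpa using Or.inr (by simpa using ha)))]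
      _ = (kS K y z * K w σ) * kprodS K z l := by rw [mul_assoc]
      _ = (K w σ * kS K y z) * kprodS K z l := by rw [kS_comm_K K y z w σ hy hz]
      _ = K w σ * kprodS K y (z :: l) := by rw [kprodS, mul_assoc]

lemma kS_comm_kprodS (K : X → Fin D → A) (a b y : X) (l : List X)
    (ha : ∀ c ∈ y :: l, ∀ μ ν : Fin D, K c μ * K a ν = -(K a ν * K c μ))
    (hb : ∀ c ∈ y :: l, ∀ μ ν : Fin D, K c μ * K b ν = -(K b ν * K c μ)) :
    kS K a b * kprodS K y l = kprodS K y l * kS K a b := by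
  unfold kS
  rw [Finset.sum_mul, Finset.mul_sum]
  refine Finset.sum_congr rfl fun ρ _ => ?_
  calc K a ρ * K b ρ * kprodS K y l = K a ρ * (K b ρ * kprodS K y l) := by
        rw [mul_assoc]
    _ = K a ρ * (kprodS K y l * K b ρ) := by rw [kprodS_comm_K K y l b ρ hb]
    _ = (K a ρ * kprodS K y l) * K b ρ := by rw [mul_assoc]
    _ = (kprodS K y l * K a ρ) * K b ρ := by rw [kprodS_comm_K K y l a ρ ha]
    _ = kprodS K y l * (K a ρ * K b ρ) := by rw [mul_assoc]

lemma ktail_eq (K : X → Fin D → A) (ν : Fin D) (x : X) (l : List X) :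
    ktail K ν x l = kprodS K x l * K (l.getLastD x) ν := by
  induction l generalizing x with
  | nil => simp [ktail, kprodS]
  | cons y l ih =>
    show (∑ ρ : Fin D, K x ρ * K y ρ) * ktail K ν y l = _
    rw [ih y, List.getLastD_cons, kprodS, mul_assoc]
    rfl

lemma kprodS_concat (K : X → Fin D → A) (y : X) (m : List X) (x : X) :
    kprodS K y (m ++ [x]) = kprodS K y m * kS K (m.getLastD y) x := by
  induction m generalizing y with
  | nil => simp [kprodS]
  | cons z m ih =>
    show kS K y z * kprodS K z (m ++ [x]) = _
    rw [ih z, List.getLastD_cons, kprodS, mul_assoc]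

lemma trace_eq (K : X → Fin D → A) (x : X) (l : List X)
    (h : ∀ a ∈ x :: l, ∀ μ ν : Fin D,
      K a μ * K (l.getLastD x) ν = -(K (l.getLastD x) ν * K a μ)) :
    ∑ μ : Fin D, kchain K μ μ (x :: l) = kS K x (l.getLastD x) * kprodS K x l := by
  have step : ∀ μ : Fin D, kchain K μ μ (x :: l)
      = K x μ * K (l.getLastD x) μ * kprodS K x l := by
    intro μ
    rw [kchain_cons, ktail_eq, ← mul_assoc, mul_assoc (K x μ),
      kprodS_comm_K K x l _ μ h, ← mul_assoc]
  rw [Finset.sum_congr rfl fun μ _ => step μ, ← Finset.sum_mul]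
  rfl

end Aux

/-- cyclicity of the traced chain
`∑_μ K^{μμ}_{[1,2,…,n]} = ∑_μ K^{μμ}_{[2,…,n,1]}` (n ≥ 2) for pairwise
anticommuting `K_i^μ`. -/
theorem kchain_trace_cyclic (A X : Type*) [Ring A] (D : ℕ) (hD : 1 ≤ D)
    (K : X → Fin D → A) (x : X) (l : List X) (hl : l ≠ [])
    (hanti : ∀ y ∈ x :: l, ∀ z ∈ x :: l, ∀ μ ν : Fin D,
      K y μ * K z ν = -(K z ν * K y μ)) :
    ∑ μ : Fin D, kchain K μ μ (x :: l) = ∑ μ : Fin D, kchain K μ μ (l ++ [x]) := by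
  obtain ⟨y, m, rfl⟩ := List.exists_cons_of_ne_nil hl
  have hx : x ∈ x :: y :: m := by simp
  have hy : y ∈ x :: y :: m := by simp
  set e : X := m.getLastD y with he
  have hem : e ∈ x :: y :: m :=
    List.mem_cons_of_mem _ (getLastD_mem m y)
  have H := hanti
  -- left side
  have hgl : (y :: m).getLastD x = e := by rw [List.getLastD_cons, he]
  have L : ∑ μ : Fin D, kchain K μ μ (x :: y :: m)
      = kS K x e * kprodS K x (y :: m) := by
    rw [trace_eq K x (y :: m) (by rw [hgl]; exact fun a ha μ ν => H a ha e hem μ ν), hgl]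
  -- right side
  have hgr : (m ++ [x]).getLastD y = x := getLastD_concat' m x y
  have hmem : ∀ a ∈ y :: (m ++ [x]), a = x ∨ a ∈ x :: y :: m := by
    intro a ha
    simp only [List.mem_cons, List.mem_append] at ha ⊢
    tauto
  have R : ∑ μ : Fin D, kchain K μ μ ((y :: m) ++ [x])
      = kS K y x * kprodS K y (m ++ [x]) := by
    have heq : (y :: m) ++ [x] = y :: (m ++ [x]) := rfl
    rw [heq, trace_eq K y (m ++ [x]) (by
      rw [hgr]
      intro a ha μ ν
      rcases hmem a ha with h | h
      · rw [h]; exact H x hx x hx μ ν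
      · exact H a h x hx μ ν), hgr]
  rw [L, R, kprodS_concat, ← he]
  -- algebra
  have skew_yx : kS K y x = -kS K x y := kS_skew K y x (H y hy x hx)
  have skew_ex : kS K e x = -kS K x e := kS_skew K e x (H e hem x hx)
  have commP : kS K x e * kprodS K y m = kprodS K y m * kS K x e := by
    refine kS_comm_kprodS K x e y m ?_ ?_
    · exact fun c hc μ ν => H c (List.mem_cons_of_mem _ hc) x hx μ ν
    · exact fun c hc μ ν => H c (List.mem_cons_of_mem _ hc) e hem μ ν
  have commSS : kS K x e * kS K x y = kS K x y * kS K x e := by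
    have expand : kS K x y = ∑ ρ : Fin D, K x ρ * K y ρ := rfl
    rw [expand, Finset.mul_sum, Finset.sum_mul]
    refine Finset.sum_congr rfl fun ρ _ => ?_
    have h1 : kS K x e * K x ρ = K x ρ * kS K x e :=
      kS_comm_K K x e x ρ (H x hx x hx) (H e hem x hx)
    have h2 : kS K x e * K y ρ = K y ρ * kS K x e :=
      kS_comm_K K x e y ρ (H x hx y hy) (H e hem y hy)
    calc kS K x e * (K x ρ * K y ρ)
        = (kS K x e * K x ρ) * K y ρ := by rw [mul_assoc]
      _ = K x ρ * (kS K x e * K y ρ) := by rw [h1, mul_assoc]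
      _ = K x ρ * (K y ρ * kS K x e) := by rw [h2]
      _ = K x ρ * K y ρ * kS K x e := by rw [mul_assoc]
  calc kS K x e * kprodS K x (y :: m)
      = kS K x e * (kS K x y * kprodS K y m) := by rw [kprodS]
    _ = (kS K x e * kS K x y) * kprodS K y m := by rw [mul_assoc]
    _ = kS K x y * (kS K x e * kprodS K y m) := by rw [commSS, mul_assoc]
    _ = kS K x y * (kprodS K y m * kS K x e) := by rw [commP]
    _ = kS K y x * (kprodS K y m * kS K e x) := by
        rw [skew_yx, skew_ex, mul_neg, mul_neg, neg_mul, neg_neg]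
end

section
/- Let A be an associative unital ℂ-algebra, D ≥ 1, and let K_r^μ, K_s^μ ∈ A (μ ∈ {0,…,D−1}) be elements such that all of them pairwise anticommute (K_x^μ K_y^ν = −K_y^ν K_x^μ for x,y ∈ {r,s} and all μ,ν), and let k_s ∈ ℂ^D satisfy the Bianchi identity at s: k_s^μ K_s^ν K_s^ρ + k_s^ν K_s^ρ K_s^μ + k_s^ρ K_s^μ K_s^ν = 0 for all μ, ν, ρ. Then ∑_{μ,σ} k_s^μ K_r^μ K_r^σ K_s^σ K_s^ρ = (1/2) (∑_{μ,σ} K_r^μ K_r^σ K_s^σ K_s^μ) · k_s^ρ for every ρ. -/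
/-- two-point contraction identity
`∑_{μ,σ} k_s^μ K_r^μ K_r^σ K_s^σ K_s^ρ = ½ (∑_{μ,σ} K_r^μ K_r^σ K_s^σ K_s^μ) k_s^ρ`,
from pairwise anticommutativity and the Bianchi identity at `s`. -/
theorem kchain_two_point_contraction (A : Type*) [Ring A] [Algebra ℂ A]
    (D : ℕ) (hD : 1 ≤ D) (Kr Ks : Fin D → A)
    (hrr : ∀ μ ν : Fin D, Kr μ * Kr ν = -(Kr ν * Kr μ))
    (hrs : ∀ μ ν : Fin D, Kr μ * Ks ν = -(Ks ν * Kr μ))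
    (hsr : ∀ μ ν : Fin D, Ks μ * Kr ν = -(Kr ν * Ks μ))
    (hss : ∀ μ ν : Fin D, Ks μ * Ks ν = -(Ks ν * Ks μ))
    (ks : Fin D → ℂ)
    (hbianchi : ∀ μ ν ρ : Fin D,
      ks μ • (Ks ν * Ks ρ) + ks ν • (Ks ρ * Ks μ) + ks ρ • (Ks μ * Ks ν) = 0) :
    ∀ ρ : Fin D,
      ∑ μ : Fin D, ∑ σ : Fin D, ks μ • (Kr μ * Kr σ * Ks σ * Ks ρ)
        = ((1 : ℂ) / 2) • (ks ρ • ∑ μ : Fin D, ∑ σ : Fin D,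
            Kr μ * Kr σ * Ks σ * Ks μ) := by
  intro ρ
  set L := ∑ μ : Fin D, ∑ σ : Fin D, ks μ • (Kr μ * Kr σ * Ks σ * Ks ρ) with hL
  set S := ∑ μ : Fin D, ∑ σ : Fin D, Kr μ * Kr σ * Ks σ * Ks μ with hSdef
  -- per-term Bianchi rearrangement
  have hB : ∀ μ σ : Fin D, ks μ • (Kr μ * Kr σ * Ks σ * Ks ρ)
      = -(ks σ • (Kr μ * Kr σ * (Ks ρ * Ks μ))) + ks ρ • (Kr μ * Kr σ * Ks σ * Ks μ) := by
    intro μ σ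
    have h := hbianchi μ σ ρ
    rw [hss μ σ, smul_neg] at h
    have h2 : ks μ • (Ks σ * Ks ρ)
        = -(ks σ • (Ks ρ * Ks μ)) + ks ρ • (Ks σ * Ks μ) := by
      have h3 : ks μ • (Ks σ * Ks ρ) - (-(ks σ • (Ks ρ * Ks μ)) + ks ρ • (Ks σ * Ks μ)) = 0 := by
        rw [← h]; abel
      exact sub_eq_zero.mp h3
    calc ks μ • (Kr μ * Kr σ * Ks σ * Ks ρ)
        = (Kr μ * Kr σ) * (ks μ • (Ks σ * Ks ρ)) := by
          rw [mul_smul_comm, mul_assoc]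
      _ = (Kr μ * Kr σ) * (-(ks σ • (Ks ρ * Ks μ)) + ks ρ • (Ks σ * Ks μ)) := by rw [h2]
      _ = -(ks σ • (Kr μ * Kr σ * (Ks ρ * Ks μ))) + ks ρ • (Kr μ * Kr σ * Ks σ * Ks μ) := by
          rw [mul_add, mul_neg, mul_smul_comm, mul_smul_comm, ← mul_assoc (Kr μ * Kr σ) (Ks σ)]
  -- the cross sum equals L
  have hT : (∑ μ : Fin D, ∑ σ : Fin D, ks σ • (Kr μ * Kr σ * (Ks ρ * Ks μ))) = L := by
    rw [Finset.sum_comm]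
    refine Finset.sum_congr rfl fun σ _ => Finset.sum_congr rfl fun μ _ => ?_
    rw [hrr μ σ, hss ρ μ, neg_mul_neg, ← mul_assoc]
  -- key identity
  have key : L = -L + ks ρ • S := by
    calc L = ∑ μ : Fin D, ∑ σ : Fin D,
          (-(ks σ • (Kr μ * Kr σ * (Ks ρ * Ks μ))) + ks ρ • (Kr μ * Kr σ * Ks σ * Ks μ)) := by
          rw [hL]
          exact Finset.sum_congr rfl fun μ _ => Finset.sum_congr rfl fun σ _ => hB μ σ
      _ = -(∑ μ : Fin D, ∑ σ : Fin D, ks σ • (Kr μ * Kr σ * (Ks ρ * Ks μ)))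
            + ks ρ • S := by
          rw [hSdef, Finset.smul_sum]
          simp [Finset.sum_add_distrib, Finset.sum_neg_distrib, Finset.smul_sum]
      _ = -L + ks ρ • S := by rw [hT]
  have h2L : (2 : ℂ) • L = ks ρ • S := by
    have : L + L = ks ρ • S := by
      nth_rewrite 1 [key]; abel
    rw [← this, two_smul]
  calc L = ((1 : ℂ) / 2) • ((2 : ℂ) • L) := by
        rw [smul_smul]; norm_num
    _ = ((1 : ℂ) / 2) • (ks ρ • S) := by rw [h2L]
end

section
/- Let A be an associative unital ℂ-algebra and let K_x^μ ∈ A, for points x ∈ {t_1,…,t_m, r, u_1,…,u_ℓ} (m ≥ 1, ℓ ≥ 1) and μ ∈ {0,…,D−1}, be pairwise anticommuting (K_x^μ K_y^ν = −K_y^ν K_x^μ for all points x,y and all μ,ν). Let k_r ∈ ℂ^D satisfy the Bianchi identity at r: k_r^μ K_r^ν K_r^ρ + k_r^ν K_r^ρ K_r^μ + k_r^ρ K_r^μ K_r^ν = 0 for all μ,ν,ρ. Writing K^{μν}_{[x_1,…,x_n]} for the ordered chain K_{x_1}^μ (∏_{k=1}^{n−1} ∑_ρ K_{x_k}^ρ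 K_{x_{k+1}}^ρ) K_{x_n}^ν, one has the antisymmetrization identity: ∑_ρ K^{μρ}_{[t_1⋯t_m, r, u_1⋯u_ℓ]} k_r^ρ − (−1)^ℓ ∑_ρ K^{μρ}_{[t_1⋯t_m, r, u_ℓ⋯u_1]} k_r^ρ = (∑_ρ K^{μρ}_{[t_1⋯t_m]} k_r^ρ) · (∑_σ K^{σσ}_{[r, u_1⋯u_ℓ]}). -/
set_option linter.unusedSectionVars false

namespace KChainAux

variable {A X : Type*} [Ring A] [Algebra ℂ A] {D : ℕ}

def link (K : X → Fin D → A) (x y : X) : A := ∑ ρ : Fin D, K x ρ * K y ρ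

def lp (K : X → Fin D → A) : List X → A
  | [] => 1
  | [_] => 1
  | x :: y :: l => link K x y * lp K (y :: l)

@[simp] lemma lp_nil (K : X → Fin D → A) : lp K [] = 1 := rfl
@[simp] lemma lp_single (K : X → Fin D → A) (x : X) : lp K [x] = 1 := rfl
lemma lp_cons₂ (K : X → Fin D → A) (x y : X) (l : List X) :
    lp K (x :: y :: l) = link K x y * lp K (y :: l) := rfl

lemma lp_cons (K : X → Fin D → A) (x : X) {v : List X} (hv : v ≠ []) :
    lp K (x :: v) = link K x (v.head hv) * lp K v := by
  cases v with
  | nil => exact absurd rfl hv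
  | cons y l => rfl

lemma lp_append_single (K : X → Fin D → A) :
    ∀ (v : List X) (hv : v ≠ []) (z : X),
      lp K (v ++ [z]) = lp K v * link K (v.getLast hv) z
  | [x], _, z => by simp [lp_cons₂]
  | x :: y :: l, _, z => by
    have h : (x :: y :: l) ++ [z] = x :: y :: (l ++ [z]) := by simp
    have h2 : (y :: (l ++ [z])) = (y :: l) ++ [z] := by simp
    rw [h, lp_cons₂, h2, lp_append_single K (y :: l) (by simp) z, ← mul_assoc, ← lp_cons₂]
    rw [List.getLast_cons (by simp : (y :: l) ≠ [])]

lemma ktail_eq (K : X → Fin D → A) (ν : Fin D) :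
    ∀ (x : X) (l : List X),
      ktail K ν x l = lp K (x :: l) * K ((x :: l).getLast (by simp)) ν
  | x, [] => by simp [ktail]
  | x, y :: l => by
    show (∑ ρ : Fin D, K x ρ * K y ρ) * ktail K ν y l = _
    rw [ktail_eq K ν y l, lp_cons₂, mul_assoc]
    rfl

lemma kchain_eq (K : X → Fin D → A) (μ ν : Fin D) (x : X) (l : List X) :
    kchain K μ ν (x :: l) = K x μ * lp K (x :: l) * K ((x :: l).getLast (by simp)) ν := by
  rw [kchain, ktail_eq, mul_assoc]

lemma sum_smul_kchain (K : X → Fin D → A) (kr : Fin D → ℂ) (μ : Fin D) (x : X) (l : List X) :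
    ∑ ρ : Fin D, kr ρ • kchain K μ ρ (x :: l)
      = K x μ * lp K (x :: l) * (∑ ρ : Fin D, kr ρ • K ((x :: l).getLast (by simp)) ρ) := by
  rw [Finset.mul_sum]
  exact Finset.sum_congr rfl fun ρ _ => by rw [kchain_eq, mul_smul_comm]

lemma lp_append (K : X → Fin D → A) :
    ∀ (v : List X) (hv : v ≠ []) (y : X) (w : List X),
      lp K (v ++ y :: w) = lp K v * link K (v.getLast hv) y * lp K (y :: w)
  | [x], _, y, w => by simp [lp_cons₂]
  | x :: x2 :: l, _, y, w => by
    have h : (x :: x2 :: l) ++ y :: w = x :: x2 :: (l ++ y :: w) := by simp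
    have h2 : (x2 :: (l ++ y :: w)) = (x2 :: l) ++ y :: w := by simp
    rw [h, lp_cons₂, h2, lp_append K (x2 :: l) (by simp) y w, ← mul_assoc, ← mul_assoc,
      ← lp_cons₂, List.getLast_cons (by simp : (x2 :: l) ≠ [])]

section anti
variable {K : X → Fin D → A} {S : List X}
variable (hanti : ∀ x ∈ S, ∀ y ∈ S, ∀ μ ν : Fin D, K x μ * K y ν = -(K y ν * K x μ))
include hanti

lemma swap_aux {x y : X} (hx : x ∈ S) (hy : y ∈ S) (μ ν : Fin D) (t : A) :
    K x μ * (K y ν * t) = -(K y ν * (K x μ * t)) := by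
  rw [← mul_assoc, hanti x hx y hy, neg_mul, mul_assoc]

lemma comm_K_link {z x y : X} (hz : z ∈ S) (hx : x ∈ S) (hy : y ∈ S) (μ : Fin D) :
    Commute (K z μ) (link K x y) := by
  show K z μ * link K x y = link K x y * K z μ
  rw [link, Finset.mul_sum, Finset.sum_mul]
  refine Finset.sum_congr rfl fun ρ _ => ?_
  rw [← mul_assoc, hanti z hz x hx μ ρ, neg_mul, mul_assoc, hanti z hz y hy μ ρ, mul_neg,
    neg_neg, ← mul_assoc]

lemma comm_K_lp {z : X} (hz : z ∈ S) (μ : Fin D) :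
    ∀ (v : List X), v ⊆ S → Commute (K z μ) (lp K v)
  | [], _ => by simp
  | [x], _ => by simp
  | x :: y :: l, hv => by
    rw [lp_cons₂]
    exact (comm_K_link hanti hz (hv (by simp)) (hv (by simp)) μ).mul_right
      (comm_K_lp hz μ (y :: l) (fun w hw => hv (by simp [List.mem_cons] at hw ⊢; tauto)))

lemma comm_link_lp {x y : X} (hx : x ∈ S) (hy : y ∈ S) {v : List X} (hv : v ⊆ S) :
    Commute (link K x y) (lp K v) :=
  Commute.sum_left _ _ _ fun ρ _ =>
    (comm_K_lp hanti hx ρ v hv).mul_left (comm_K_lp hanti hy ρ v hv)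

lemma comm_kappa_lp (kr : Fin D → ℂ) {z : X} (hz : z ∈ S) {v : List X} (hv : v ⊆ S) :
    Commute (∑ ρ : Fin D, kr ρ • K z ρ) (lp K v) :=
  Commute.sum_left _ _ _ fun ρ _ => by
    have h := comm_K_lp hanti hz ρ v hv
    show (kr ρ • K z ρ) * lp K v = lp K v * (kr ρ • K z ρ)
    rw [smul_mul_assoc, h.eq, mul_smul_comm]

lemma link_swap {x y : X} (hx : x ∈ S) (hy : y ∈ S) : link K x y = -link K y x := by
  rw [link, link, ← Finset.sum_neg_distrib]
  exact Finset.sum_congr rfl fun ρ _ => by rw [hanti x hx y hy]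

lemma lp_reverse : ∀ (v : List X), v ⊆ S →
    lp K v.reverse = ((-1 : ℂ)) ^ (v.length - 1) • lp K v
  | [], _ => by simp
  | [x], _ => by simp
  | x :: y :: l, hv => by
    have hvs : (y :: l) ⊆ S := fun w hw => hv (by simp [List.mem_cons] at hw ⊢; tauto)
    have hx : x ∈ S := hv (by simp)
    have hy : y ∈ S := hv (by simp)
    have hrev : (x :: y :: l).reverse = (y :: l).reverse ++ [x] := by simp
    rw [hrev, lp_append_single K (y :: l).reverse (by simp) x, lp_reverse (y :: l) hvs]
    have hgl : ((y :: l).reverse).getLast (by simp) = y := by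
      rw [List.getLast_reverse, List.head_cons]
    rw [hgl, link_swap hanti hy hx, lp_cons₂]
    have hc : lp K (y :: l) * link K x y = link K x y * lp K (y :: l) :=
      (comm_link_lp hanti hx hy hvs).eq.symm
    rw [mul_neg, smul_mul_assoc, hc]
    rw [show (x :: y :: l).length - 1 = ((y :: l).length - 1) + 1 by simp]
    rw [pow_succ]
    rw [← neg_smul]
    ring_nf

lemma core {a b c r : X} (ha : a ∈ S) (hb : b ∈ S) (hc : c ∈ S) (hr : r ∈ S)
    (kr : Fin D → ℂ)
    (hbianchi : ∀ μ ν ρ : Fin D,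
      kr μ • (K r ν * K r ρ) + kr ν • (K r ρ * K r μ) + kr ρ • (K r μ * K r ν) = 0) :
    link K a r * link K r b * (∑ ρ : Fin D, kr ρ • K c ρ)
      + link K a r * link K r c * (∑ ρ : Fin D, kr ρ • K b ρ)
    = (∑ ρ : Fin D, kr ρ • K a ρ) * link K r b * link K r c := by
  have expand3 : ∀ f g h : Fin D → A,
      (∑ σ : Fin D, f σ) * (∑ ρ : Fin D, g ρ) * (∑ τ : Fin D, h τ)
        = ∑ σ : Fin D, ∑ ρ : Fin D, ∑ τ : Fin D, f σ * g ρ * h τ := by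
    intro f g h
    rw [mul_assoc, Finset.sum_mul]
    refine Finset.sum_congr rfl fun σ _ => ?_
    rw [Finset.sum_mul, Finset.mul_sum]
    refine Finset.sum_congr rfl fun ρ _ => ?_
    rw [Finset.mul_sum, Finset.mul_sum]
    exact Finset.sum_congr rfl fun τ _ => (mul_assoc _ _ _).symm
  have hzero : ∑ σ : Fin D, ∑ ρ : Fin D, ∑ τ : Fin D,
      K a σ * (kr τ • (K r σ * K r ρ) + kr σ • (K r ρ * K r τ) + kr ρ • (K r τ * K r σ))
        * (K b ρ * K c τ) = (0 : A) := by
    have h : ∀ σ ρ τ : Fin D,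
        kr τ • (K r σ * K r ρ) + kr σ • (K r ρ * K r τ) + kr ρ • (K r τ * K r σ) = 0 :=
      fun σ ρ τ => hbianchi τ σ ρ
    simp [h]
  have hsum : (∑ σ : Fin D, ∑ ρ : Fin D, ∑ τ : Fin D,
        K a σ * (kr τ • (K r σ * K r ρ)) * (K b ρ * K c τ))
      + (∑ σ : Fin D, ∑ ρ : Fin D, ∑ τ : Fin D,
        K a σ * (kr σ • (K r ρ * K r τ)) * (K b ρ * K c τ))
      + (∑ σ : Fin D, ∑ ρ : Fin D, ∑ τ : Fin D,
        K a σ * (kr ρ • (K r τ * K r σ)) * (K b ρ * K c τ)) = 0 := by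
    rw [← hzero]
    simp only [mul_add, add_mul, Finset.sum_add_distrib]
  have E1 : link K a r * link K r b * (∑ ρ : Fin D, kr ρ • K c ρ)
      = ∑ σ : Fin D, ∑ ρ : Fin D, ∑ τ : Fin D,
          K a σ * (kr τ • (K r σ * K r ρ)) * (K b ρ * K c τ) := by
    rw [link, link, expand3]
    refine Finset.sum_congr rfl fun σ _ => Finset.sum_congr rfl fun ρ _ =>
      Finset.sum_congr rfl fun τ _ => ?_
    simp only [smul_mul_assoc, mul_smul_comm, mul_assoc]
  have E2 : link K a r * link K r c * (∑ ρ : Fin D, kr ρ • K b ρ)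
      = ∑ σ : Fin D, ∑ ρ : Fin D, ∑ τ : Fin D,
          K a σ * (kr ρ • (K r τ * K r σ)) * (K b ρ * K c τ) := by
    rw [link, link, expand3]
    refine Finset.sum_congr rfl fun σ _ => ?_
    rw [Finset.sum_comm]
    refine Finset.sum_congr rfl fun ρ _ => Finset.sum_congr rfl fun τ _ => ?_
    simp only [smul_mul_assoc, mul_smul_comm, mul_assoc]
    rw [hanti c hc b hb τ ρ, swap_aux hanti hr hr τ σ (K b ρ * K c τ)]
    simp only [mul_neg, smul_neg, neg_mul]
  have E3 : (∑ ρ : Fin D, kr ρ • K a ρ) * link K r b * link K r c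
      = -(∑ σ : Fin D, ∑ ρ : Fin D, ∑ τ : Fin D,
          K a σ * (kr σ • (K r ρ * K r τ)) * (K b ρ * K c τ)) := by
    rw [link, link, expand3, ← Finset.sum_neg_distrib]
    refine Finset.sum_congr rfl fun σ _ => ?_
    rw [← Finset.sum_neg_distrib]
    refine Finset.sum_congr rfl fun ρ _ => ?_
    rw [← Finset.sum_neg_distrib]
    refine Finset.sum_congr rfl fun τ _ => ?_
    simp only [smul_mul_assoc, mul_smul_comm, mul_assoc]
    rw [swap_aux hanti hb hr ρ τ (K c τ)]
    simp only [mul_neg, smul_neg, neg_neg]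
  rw [E1, E2, E3]
  rw [add_right_comm] at hsum
  exact eq_neg_of_add_eq_zero_left hsum

end anti

end KChainAux


open KChainAux

/-- antisymmetrization identity for the singly linked chain:
`∑_ρ K^{μρ}_{[t₁⋯tₘ r u₁⋯u_ℓ]} k_r^ρ − (−1)^ℓ ∑_ρ K^{μρ}_{[t₁⋯tₘ r u_ℓ⋯u₁]} k_r^ρ
 = (∑_ρ K^{μρ}_{[t₁⋯tₘ]} k_r^ρ) (∑_σ K^{σσ}_{[r u₁⋯u_ℓ]})`. -/
theorem kchain_singly_linked_antisymmetrization (A X : Type*) [Ring A] [Algebra ℂ A]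
    (D : ℕ) (hD : 1 ≤ D) (K : X → Fin D → A)
    (ts us : List X) (r : X) (hts : ts ≠ []) (hus : us ≠ [])
    (hanti : ∀ x ∈ ts ++ r :: us, ∀ y ∈ ts ++ r :: us, ∀ μ ν : Fin D,
      K x μ * K y ν = -(K y ν * K x μ))
    (kr : Fin D → ℂ)
    (hbianchi : ∀ μ ν ρ : Fin D,
      kr μ • (K r ν * K r ρ) + kr ν • (K r ρ * K r μ) + kr ρ • (K r μ * K r ν) = 0) :
    ∀ μ : Fin D,
      (∑ ρ : Fin D, kr ρ • kchain K μ ρ (ts ++ r :: us))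
        - ((-1 : ℂ) ^ us.length) • (∑ ρ : Fin D, kr ρ • kchain K μ ρ (ts ++ r :: us.reverse))
      = (∑ ρ : Fin D, kr ρ • kchain K μ ρ ts)
          * (∑ σ : Fin D, kchain K σ σ (r :: us)) := by
  intro μ
  obtain ⟨t1, ts', rfl⟩ := List.exists_cons_of_ne_nil hts
  obtain ⟨b, us', rfl⟩ := List.exists_cons_of_ne_nil hus
  set S : List X := (t1 :: ts') ++ r :: b :: us' with hS
  have husne : (b :: us') ≠ [] := by simp
  have htsne : (t1 :: ts') ≠ [] := by simp
  have hrS : r ∈ S := by simp [hS]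
  have hbS : b ∈ S := by simp [hS]
  have hZsub : (t1 :: ts') ⊆ S := List.subset_append_left _ _
  have hMsub : (b :: us') ⊆ S := fun w hw =>
    List.mem_append_right _ (List.mem_cons_of_mem _ hw)
  have hRMsub : (r :: b :: us') ⊆ S := fun w hw => List.mem_append_right _ hw
  set a : X := (t1 :: ts').getLast htsne with ha_def
  set c : X := (b :: us').getLast husne with hc_def
  have haS : a ∈ S := List.mem_append_left _ (List.getLast_mem htsne)
  have hcS : c ∈ S :=
    List.mem_append_right _ (List.mem_cons_of_mem _ (List.getLast_mem husne))
  set Z : A := lp K (t1 :: ts') with hZ_def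
  set M : A := lp K (b :: us') with hM_def
  have hA : (∑ ρ : Fin D, kr ρ • kchain K μ ρ ((t1 :: ts') ++ r :: b :: us'))
      = K t1 μ * (Z * link K a r * (link K r b * M)) * (∑ ρ : Fin D, kr ρ • K c ρ) := by
    rw [List.cons_append, sum_smul_kchain]
    congr 1
    · rw [show t1 :: (ts' ++ r :: b :: us') = (t1 :: ts') ++ r :: b :: us' from
        List.cons_append.symm]
      rw [lp_append K (t1 :: ts') htsne r (b :: us'), lp_cons₂, mul_assoc]
    · refine Finset.sum_congr rfl fun ρ _ => ?_
      congr 2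
      rw [List.getLast_cons (by simp), List.getLast_append_of_ne_nil (by simp),
        List.getLast_cons husne]
      simp
  have hB : (∑ ρ : Fin D, kr ρ • kchain K μ ρ ((t1 :: ts') ++ r :: (b :: us').reverse))
      = ((-1 : ℂ) ^ us'.length) •
        (K t1 μ * (Z * link K a r * (link K r c * M)) * (∑ ρ : Fin D, kr ρ • K b ρ)) := by
    rw [List.cons_append, sum_smul_kchain]
    have h1 : lp K (t1 :: (ts' ++ r :: (b :: us').reverse))
        = ((-1 : ℂ) ^ us'.length) • (Z * link K a r * (link K r c * M)) := by
      rw [show t1 :: (ts' ++ r :: (b :: us').reverse)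
            = (t1 :: ts') ++ r :: (b :: us').reverse from List.cons_append.symm]
      rw [lp_append K (t1 :: ts') htsne r ((b :: us').reverse)]
      rw [lp_cons K r (by simp : (b :: us').reverse ≠ [])]
      rw [List.head_reverse]
      rw [lp_reverse hanti (b :: us') hMsub]
      rw [show (b :: us').length - 1 = us'.length from by simp]
      simp only [smul_mul_assoc, mul_smul_comm, mul_assoc]
      rfl
    have h2 : (∑ ρ : Fin D,
          kr ρ • K ((t1 :: (ts' ++ r :: (b :: us').reverse)).getLast (by simp)) ρ)
        = ∑ ρ : Fin D, kr ρ • K b ρ := by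
      refine Finset.sum_congr rfl fun ρ _ => ?_
      congr 2
      rw [List.getLast_cons (by simp), List.getLast_append_of_ne_nil (by simp),
        List.getLast_cons (by simp : (b :: us').reverse ≠ []), List.getLast_reverse,
        List.head_cons]
      simp
    rw [h1, h2]
    simp only [smul_mul_assoc, mul_smul_comm]
  have hD' : (∑ ρ : Fin D, kr ρ • kchain K μ ρ (t1 :: ts'))
      = K t1 μ * Z * (∑ ρ : Fin D, kr ρ • K a ρ) := by
    rw [sum_smul_kchain]
  have hC : (∑ σ : Fin D, kchain K σ σ (r :: b :: us'))
      = link K r b * M * link K r c := by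
    have step : ∀ σ : Fin D, kchain K σ σ (r :: b :: us')
        = lp K (r :: b :: us') * (K r σ * K c σ) := by
      intro σ
      rw [kchain_eq]
      rw [show ((r :: b :: us').getLast (by simp)) = c from List.getLast_cons husne]
      rw [(comm_K_lp hanti hrS σ (r :: b :: us') hRMsub).eq, mul_assoc]
    rw [Finset.sum_congr rfl fun σ _ => step σ, ← Finset.mul_sum]
    rw [lp_cons₂]
    rfl
  rw [hA, hB, hD', hC]
  rw [smul_smul]
  have hsc : ((-1 : ℂ)) ^ (b :: us').length * ((-1 : ℂ)) ^ us'.length = -1 := by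
    rw [List.length_cons, ← pow_add]
    exact Odd.neg_one_pow ⟨us'.length, by ring⟩
  rw [hsc, neg_one_smul, sub_neg_eq_add]
  have hMκc : M * (∑ ρ : Fin D, kr ρ • K c ρ) = (∑ ρ : Fin D, kr ρ • K c ρ) * M :=
    (comm_kappa_lp hanti kr hcS hMsub).eq.symm
  have hMκb : M * (∑ ρ : Fin D, kr ρ • K b ρ) = (∑ ρ : Fin D, kr ρ • K b ρ) * M :=
    (comm_kappa_lp hanti kr hbS hMsub).eq.symm
  have hMlrc : M * link K r c = link K r c * M :=
    (comm_link_lp hanti hrS hcS hMsub).eq.symm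
  have key := core hanti haS hbS hcS hrS kr hbianchi
  have key' := congrArg (· * M) key
  simp only [add_mul, mul_assoc] at key' ⊢
  rw [hMκc, hMκb, hMlrc, ← mul_add, ← mul_add, key']
end

section
/- Let U ⊆ ℂ be open and let ω₀, ω₊, χ : U → ℂ be continuously differentiable functions satisfying the two superholomorphicity equations for weight n = 1/2: ∂ω₀/∂z̄ + ½ χ ω₊ = 0 and ∂ω₊/∂z̄ + ½ χ ∂ω₀/∂z + ½ (∂χ/∂z) ω₀ = 0 on U. Then the 1-form ω₊ dz − ½ χ ω₀ dz̄ is closed on U, i.e. ∂/∂z̄ (ω₊) + ½ ∂/∂z (χ ω₀) = 0. -/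
/-- The Wirtinger derivative `∂f/∂z = ½(∂ₓf − i ∂_y f)` of `f : ℂ → ℂ`. -/
noncomputable def wderZ (f : ℂ → ℂ) (z : ℂ) : ℂ :=
  (1 / 2 : ℂ) * (fderiv ℝ f z 1 - Complex.I * fderiv ℝ f z Complex.I)

/-- The Wirtinger derivative `∂f/∂z̄ = ½(∂ₓf + i ∂_y f)`. -/
noncomputable def wderZbar (f : ℂ → ℂ) (z : ℂ) : ℂ :=
  (1 / 2 : ℂ) * (fderiv ℝ f z 1 + Complex.I * fderiv ℝ f z Complex.I)

lemma wderZ_mul (f g : ℂ → ℂ) (z : ℂ) (hf : DifferentiableAt ℝ f z)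
    (hg : DifferentiableAt ℝ g z) :
    wderZ (fun w => f w * g w) z = wderZ f z * g z + f z * wderZ g z := by
  unfold wderZ
  rw [fderiv_fun_mul hf hg]
  simp only [ContinuousLinearMap.add_apply, ContinuousLinearMap.smul_apply,
    smul_eq_mul]
  ring

/-- if `(ω₀, ω₊)` satisfy the superholomorphicity equations for
weight `n = ½` with gravitino slice `χ`, then the 1-form `ω₊ dz − ½ χ ω₀ dz̄` is
closed: `∂_z̄ ω₊ + ½ ∂_z (χ ω₀) = 0`. -/
theorem superholomorphic_half_form_closed
    (U : Set ℂ) (hU : IsOpen U) (ω₀ ωp χ : ℂ → ℂ)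
    (hω₀ : ContDiffOn ℝ 1 ω₀ U) (hωp : ContDiffOn ℝ 1 ωp U)
    (hχ : ContDiffOn ℝ 1 χ U)
    (heq1 : ∀ z ∈ U, wderZbar ω₀ z + (1 / 2 : ℂ) * (χ z * ωp z) = 0)
    (heq2 : ∀ z ∈ U, wderZbar ωp z + (1 / 2 : ℂ) * (χ z * wderZ ω₀ z)
        + (1 / 2 : ℂ) * (wderZ χ z * ω₀ z) = 0) :
    ∀ z ∈ U, wderZbar ωp z + (1 / 2 : ℂ) * wderZ (fun w => χ w * ω₀ w) z = 0 := by
  intro z hz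
  have hχ' : DifferentiableAt ℝ χ z :=
    (hχ.differentiableOn one_ne_zero).differentiableAt (hU.mem_nhds hz)
  have hω₀' : DifferentiableAt ℝ ω₀ z :=
    (hω₀.differentiableOn one_ne_zero).differentiableAt (hU.mem_nhds hz)
  rw [wderZ_mul χ ω₀ z hχ' hω₀']
  have := heq2 z hz
  linear_combination this
end
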